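/- For every finite set C ⊆ (0,1), there exists a continuous function f : ℝ → ℝ such that f is distance-preserving on every subset of [0,1] whose open convex hull contains no point of C, and for every c ∈ C, f is not injective on any neighborhood of c. (Every finite unsigned 1D crease pattern can be folded flat, e.g., by an accordion fold.) -/

import Mathlib

open MeasureTheory Set

/-- The slope function of the accordion fold: `(-1)^(number of creases ≤ x)`. -/
noncomputable def sg (F : Finset ℝ) (x : ℝ) : ℝ :=
  ∏ c ∈ F, if c ≤ x then (-1 : ℝ) else 1

lemma sg_abs (F : Finset ℝ) (x : ℝ) : |sg F x| = 1 := by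
  unfold sg
  rw [Finset.abs_prod]
  refine Finset.prod_eq_one fun c _ => ?_
  split <;> simp

lemma sg_meas (F : Finset ℝ) : Measurable (sg F) := by
  unfold sg
  refine Finset.measurable_prod _ fun c _ => ?_
  exact Measurable.ite measurableSet_Ici measurable_const measurable_const

lemma sg_intInt (F : Finset ℝ) (a b : ℝ) :
    IntervalIntegrable (sg F) volume a b := by
  rw [intervalIntegrable_iff]
  refine ((integrableOn_const_iff (C := (1:ℝ))).2 (Or.inr measure_Ioc_lt_top)).mono'
    (sg_meas F).aestronglyMeasurable ?_
  filter_upwards with t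
  simp [Real.norm_eq_abs, sg_abs]

lemma integral_sg (F : Finset ℝ) {x y : ℝ} (hxy : x ≤ y) (k : ℝ)
    (h : ∀ t ∈ Set.Ioo x y, sg F t = k) :
    ∫ t in x..y, sg F t = k * (y - x) := by
  have hy : ∀ᵐ t : ℝ, t ≠ y := by
    rw [MeasureTheory.ae_iff]
    simpa using measure_singleton y
  have : ∫ t in x..y, sg F t = ∫ _t in x..y, k := by
    refine intervalIntegral.integral_congr_ae ?_
    filter_upwards [hy] with t ht hmem
    rw [Set.uIoc_of_le hxy] at hmem
    exact h t ⟨hmem.1, lt_of_le_of_ne hmem.2 ht⟩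
  rw [this, intervalIntegral.integral_const, smul_eq_mul, mul_comm]

/-- `f` preserves distances between points of `S`. -/
def DistPreservingOn (f : ℝ → ℝ) (S : Set ℝ) : Prop :=
  ∀ x ∈ S, ∀ y ∈ S, |f x - f y| = |x - y|

/-- Every finite unsigned 1D crease pattern can be folded flat: for every
finite crease set `C ⊆ (0,1)` there is a continuous map `f` that is
distance-preserving on every subset of `[0,1]` whose open convex hull avoids
`C`, and that genuinely folds (is not injective on any neighborhood) at each
crease. -/
theorem crease_pattern_folds_flat
    (C : Set ℝ) (hCfin : C.Finite) (hCsub : C ⊆ Set.Ioo (0:ℝ) 1) :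
    ∃ f : ℝ → ℝ, Continuous f ∧
      (∀ S : Set ℝ, S ⊆ Set.Icc (0:ℝ) 1 → interior (convexHull ℝ S) ∩ C = ∅ →
        DistPreservingOn f S) ∧
      (∀ c ∈ C, ∀ U ∈ nhds c, ¬ Set.InjOn f U) := by
  classical
  set F := hCfin.toFinset with hF
  have hFC : ∀ c : ℝ, c ∈ F ↔ c ∈ C := fun c => hCfin.mem_toFinset
  set f : ℝ → ℝ := fun x => ∫ t in (0:ℝ)..x, sg F t with hf
  have hdiff : ∀ x y : ℝ, f y - f x = ∫ t in x..y, sg F t := by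
    intro x y
    have := intervalIntegral.integral_add_adjacent_intervals
      (sg_intInt F 0 x) (sg_intInt F x y)
    simp only [hf]
    linarith
  refine ⟨f, ?_, ?_, ?_⟩
  · exact intervalIntegral.continuous_primitive (sg_intInt F) 0
  · -- distance preserving
    intro S _hS hInt
    have key : ∀ x ∈ S, ∀ y ∈ S, x ≤ y → |f x - f y| = |x - y| := by
      intro x hx y hy hxy
      have hIoo : ∀ t ∈ Set.Ioo x y, sg F t = sg F x := by
        intro t ht
        unfold sg
        refine Finset.prod_congr rfl fun c hc => ?_
        have hcC : c ∈ C := (hFC c).1 hc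
        have hcnot : c ∉ Set.Ioo x y := by
          intro hmem
          have h1 : c ∈ interior (convexHull ℝ S) := by
            have hseg : Set.Ioo x y ⊆ convexHull ℝ S := by
              have h2 : Set.Icc x y ⊆ convexHull ℝ S := by
                rw [← segment_eq_Icc hxy]
                exact (convex_convexHull ℝ S).segment_subset
                  (subset_convexHull ℝ S hx) (subset_convexHull ℝ S hy)
              exact Set.Ioo_subset_Icc_self.trans h2
            exact isOpen_Ioo.subset_interior_iff.2 hseg hmem
          exact Set.eq_empty_iff_forall_notMem.1 hInt c ⟨h1, hcC⟩
        by_cases h1 : c ≤ x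
        · rw [if_pos (h1.trans ht.1.le), if_pos h1]
        · have h2 : ¬ c ≤ t := by
            push_neg at h1 ⊢
            rcases lt_or_ge c y with h2 | h2
            · exact absurd ⟨h1, h2⟩ hcnot
            · exact ht.2.trans_le h2
          rw [if_neg h2, if_neg h1]
      have h3 := integral_sg F hxy (sg F x) hIoo
      rw [← hdiff] at h3
      rw [abs_sub_comm, h3, abs_mul, sg_abs, one_mul, abs_sub_comm]
    intro x hx y hy
    rcases le_total x y with h | h
    · exact key x hx y hy h
    · rw [abs_sub_comm, abs_sub_comm x y]
      exact key y hy x hx h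
  · -- folds at each crease
    intro c hc U hU
    obtain ⟨ε1, hε1, hball1⟩ := Metric.mem_nhds_iff.1 hU
    have hclosed : IsClosed (C \ {c}) := (hCfin.subset Set.diff_subset).isClosed
    have hcnot : c ∈ (C \ {c})ᶜ := by simp
    obtain ⟨ε2, hε2, hball2⟩ := Metric.isOpen_iff.1 hclosed.isOpen_compl c hcnot
    set ε := min ε1 ε2 with hε
    have hεpos : 0 < ε := lt_min hε1 hε2
    set δ := ε / 2 with hδ
    have hδpos : 0 < δ := by positivity
    have hδε : δ < ε := by simp only [hδ]; linarith
    have hmemU : ∀ z : ℝ, |z - c| < ε → z ∈ U := by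
      intro z hz
      exact hball1 (by simpa [Metric.mem_ball, Real.dist_eq]
        using hz.trans_le (min_le_left _ _))
    have hnocrease : ∀ c' ∈ C, c' ≠ c → ε ≤ |c' - c| := by
      intro c' hc' hne
      by_contra hlt
      push_neg at hlt
      have hmem : c' ∈ Metric.ball c ε2 := by
        simp only [Metric.mem_ball, Real.dist_eq]
        exact hlt.trans_le (min_le_right _ _)
      exact hball2 hmem ⟨hc', hne⟩
    -- key fact: for creases other than c, the sign factor is constant near c
    have hfac : ∀ c' ∈ F, c' ≠ c → ∀ t : ℝ, |t - c| ≤ δ →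
        ((c' ≤ t) ↔ (c' ≤ c - δ)) := by
      intro c' hc' hne t ht
      have habs := hnocrease c' ((hFC c').1 hc') hne
      have ht1 := abs_le.1 ht
      rcases le_abs.1 habs with h | h
      · constructor <;> intro h' <;> [skip; skip] <;> linarith
      · constructor <;> intro _ <;> linarith
    have hsg_lo : ∀ t ∈ Set.Ioo (c - δ) c, sg F t = sg F (c - δ) := by
      intro t ht
      unfold sg
      refine Finset.prod_congr rfl fun c' hc' => ?_
      by_cases hne : c' = c
      · subst hne
        rw [if_neg (not_le.2 ht.2), if_neg (by linarith : ¬ c' ≤ c' - δ)]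
      · have h1 : |t - c| ≤ δ := abs_le.2 ⟨by linarith [ht.1], by linarith [ht.2]⟩
        have h2 := hfac c' hc' hne t h1
        have h3 := hfac c' hc' hne (c - δ) (by rw [abs_le]; constructor <;> linarith)
        simp only [h2, h3]
    have hsg_hi : ∀ t ∈ Set.Ioo c (c + δ), sg F t = sg F (c + δ) := by
      intro t ht
      unfold sg
      refine Finset.prod_congr rfl fun c' hc' => ?_
      by_cases hne : c' = c
      · subst hne
        rw [if_pos ht.1.le, if_pos (by linarith : c' ≤ c' + δ)]
      · have h1 : |t - c| ≤ δ := abs_le.2 ⟨by linarith [ht.1], by linarith [ht.2]⟩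
        have h2 := hfac c' hc' hne t h1
        have h3 := hfac c' hc' hne (c + δ) (by rw [abs_le]; constructor <;> linarith)
        simp only [h2, h3]
    have hflip : sg F (c + δ) = - sg F (c - δ) := by
      have hcF : c ∈ F := (hFC c).2 hc
      unfold sg
      rw [← Finset.mul_prod_erase F _ hcF, ← Finset.mul_prod_erase F _ hcF]
      rw [if_pos (by linarith : c ≤ c + δ), if_neg (by linarith : ¬ c ≤ c - δ)]
      have : (∏ c' ∈ F.erase c, if c' ≤ c + δ then (-1:ℝ) else 1) =
          ∏ c' ∈ F.erase c, if c' ≤ c - δ then (-1:ℝ) else 1 := by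
        refine Finset.prod_congr rfl fun c' hc' => ?_
        have hne := Finset.ne_of_mem_erase hc'
        have h2 := hfac c' (Finset.mem_of_mem_erase hc') hne (c + δ)
          (by rw [abs_le]; constructor <;> linarith)
        have h3 := hfac c' (Finset.mem_of_mem_erase hc') hne (c - δ)
          (by rw [abs_le]; constructor <;> linarith)
        simp only [h2, h3]
      rw [this]; ring
    have h1 : ∫ t in (c - δ)..c, sg F t = sg F (c - δ) * δ := by
      rw [integral_sg F (by linarith : c - δ ≤ c) (sg F (c - δ)) hsg_lo]
      ring_nf
    have h2 : ∫ t in c..(c + δ), sg F t = sg F (c + δ) * δ := by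
      rw [integral_sg F (by linarith : c ≤ c + δ) (sg F (c + δ)) hsg_hi]
      ring_nf
    have hadd := intervalIntegral.integral_add_adjacent_intervals
      (sg_intInt F (c - δ) c) (sg_intInt F c (c + δ))
    have heq : f (c + δ) = f (c - δ) := by
      have h4 := hdiff (c - δ) (c + δ)
      rw [← hadd, h1, h2, hflip] at h4
      linarith
    intro hInj
    have ha : c - δ ∈ U := hmemU _ (by
      rw [show c - δ - c = -δ by ring, abs_neg, abs_of_pos hδpos]; exact hδε)
    have hb : c + δ ∈ U := hmemU _ (by
      rw [show c + δ - c = δ by ring, abs_of_pos hδpos]; exact hδε)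
    have := hInj hb ha heq
    linarith
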